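/- (Lemma 1, bound on the possible further improvement.) For every λ > 0, B(λ; c_*, v̄, K, K_1) − (λ²/n) Σ_{i=1}^n σ_i² f_2(λ c_i) ≤ λ⁵ c_*³ (K − K_1) f_5(λ c_*); that is, the bound B of Lemma 1 exceeds the idealised Bennett-type bound (λ²/n) Σ_{i=1}^n σ_i² f_2(λ c_i) by at most λ⁵ c_*³ (K − K_1) f_5(λ c_*). -/

import Mathlib

open MeasureTheory ProbabilityTheory Real Finset

/-- `f k u = ∑_{j=0}^∞ u^j / (j+k)!`. -/
noncomputable def fSeries (k : ℕ) (u : ℝ) : ℝ := ∑' j : ℕ, u ^ j / (Nat.factorial (j + k) : ℝ)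

lemma fSeries_summable (k : ℕ) (x : ℝ) :
    Summable (fun j : ℕ => x ^ j / (Nat.factorial (j + k) : ℝ)) := by
  apply Summable.of_abs
  apply Summable.of_nonneg_of_le (fun j => abs_nonneg _) (fun j => ?_)
    (Real.summable_pow_div_factorial |x|)
  rw [abs_div, abs_pow, Nat.abs_cast]
  gcongr
  omega

lemma fSeries_succ (k : ℕ) (x : ℝ) :
    fSeries k x = 1 / (Nat.factorial k : ℝ) + x * fSeries (k + 1) x := by
  unfold fSeries
  rw [Summable.tsum_eq_zero_add (fSeries_summable k x), ← tsum_mul_left]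
  congr 1
  · simp
  · refine tsum_congr fun j => ?_
    rw [pow_succ']
    have : j + 1 + k = j + (k + 1) := by omega
    rw [this, mul_div_assoc]

lemma fSeries_nonneg (k : ℕ) {x : ℝ} (hx : 0 ≤ x) : 0 ≤ fSeries k x :=
  tsum_nonneg fun j => div_nonneg (pow_nonneg hx _) (Nat.cast_nonneg _)

lemma key_pointwise {u t : ℝ} (hu : 0 ≤ u) (ht0 : 0 ≤ t) (ht1 : t ≤ 1) :
    1 / 2 + t * (fSeries 2 u - 1 / 2) - u ^ 2 * t * (1 - t) * fSeries 4 u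
        - fSeries 2 (u * t)
      ≤ u ^ 3 * t ^ 2 * fSeries 5 u := by
  have e1 : ∀ x : ℝ, fSeries 2 x = 1 / 2 + x / 6 + x ^ 2 / 24 + x ^ 3 * fSeries 5 x := by
    intro x
    rw [fSeries_succ 2, fSeries_succ 3, fSeries_succ 4]
    norm_num [Nat.factorial]
    ring
  have e2 : fSeries 4 u = 1 / 24 + u * fSeries 5 u := by
    rw [fSeries_succ 4]
    norm_num [Nat.factorial]
  have h5 : 0 ≤ u ^ 3 * t ^ 3 * fSeries 5 (u * t) := by
    have := fSeries_nonneg 5 (mul_nonneg hu ht0)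
    positivity
  have hdiff : u ^ 3 * t ^ 2 * fSeries 5 u -
      (1 / 2 + t * (fSeries 2 u - 1 / 2) - u ^ 2 * t * (1 - t) * fSeries 4 u
        - fSeries 2 (u * t)) = u ^ 3 * t ^ 3 * fSeries 5 (u * t) := by
    rw [e1 u, e1 (u * t), e2]
    ring
  linarith

/-- **Lemma 1, bound on the possible further improvement.** With the setup of Lemma 1,
for every `λ > 0`, the bound `B(λ; c✶, v̄, K, K₁)` exceeds the idealised Bennett-type bound
`(λ²/n) ∑ i, σ i ² f₂(λ c i)` by at most `λ⁵ c✶³ (K − K₁) f₅(λ c✶)`. -/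
theorem lemma_one_improvement_bound
    {Ω : Type*} [MeasurableSpace Ω] (μ : Measure Ω) [IsProbabilityMeasure μ]
    (n : ℕ) (hn : 0 < n) (X : Fin n → Ω → ℝ) (σ c : Fin n → ℝ) (cstar : ℝ)
    (hmeas : ∀ i, Measurable (X i))
    (hindep : iIndepFun X μ)
    (hmean : ∀ i, ∫ ω, X i ω ∂μ = 0)
    (hL2 : ∀ i, MemLp (X i) 2 μ)
    (hvar : ∀ i, variance (X i) μ = σ i ^ 2)
    (hcnonneg : ∀ i, 0 ≤ c i)
    (hbdd : ∀ i, ∀ᵐ ω ∂μ, X i ω ≤ c i)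
    (hcmax : ∀ i, c i ≤ cstar) (hcattained : ∃ i, c i = cstar) (hcpos : 0 < cstar)
    (v K K1 : ℝ)
    (hv : v = (1 / (n : ℝ)) * ∑ i, σ i ^ 2)
    (hK : K = (1 / (n : ℝ)) * ∑ i, σ i ^ 2 * (c i / cstar))
    (hK1 : K1 = (1 / (n : ℝ)) * ∑ i, σ i ^ 2 * (c i / cstar) * (1 - c i / cstar))
    (l : ℝ) (hl : 0 < l) :
    ((1 / 2) * l ^ 2 * v + l ^ 2 * K * (fSeries 2 (l * cstar) - 1 / 2) -
        l ^ 4 * cstar ^ 2 * K1 * fSeries 4 (l * cstar)) -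
      (l ^ 2 / (n : ℝ)) * ∑ i, σ i ^ 2 * fSeries 2 (l * c i) ≤
      l ^ 5 * cstar ^ 3 * (K - K1) * fSeries 5 (l * cstar) := by
  subst hv hK hK1
  have hlc : ∀ i, l * c i = (l * cstar) * (c i / cstar) := by
    intro i
    field_simp
  calc ((1 / 2) * l ^ 2 * ((1 / (n : ℝ)) * ∑ i, σ i ^ 2)
          + l ^ 2 * ((1 / (n : ℝ)) * ∑ i, σ i ^ 2 * (c i / cstar)) *
            (fSeries 2 (l * cstar) - 1 / 2) -
          l ^ 4 * cstar ^ 2 * ((1 / (n : ℝ)) * ∑ i, σ i ^ 2 * (c i / cstar) * (1 - c i / cstar)) *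
            fSeries 4 (l * cstar)) -
        (l ^ 2 / (n : ℝ)) * ∑ i, σ i ^ 2 * fSeries 2 (l * c i)
      = ∑ i, (l ^ 2 * (1 / (n : ℝ)) * σ i ^ 2) *
          (1 / 2 + (c i / cstar) * (fSeries 2 (l * cstar) - 1 / 2)
            - (l * cstar) ^ 2 * (c i / cstar) * (1 - c i / cstar) * fSeries 4 (l * cstar)
            - fSeries 2 (l * c i)) := by
        simp only [Finset.mul_sum, Finset.sum_mul]
        rw [← Finset.sum_add_distrib, ← Finset.sum_sub_distrib, ← Finset.sum_sub_distrib]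
        exact Finset.sum_congr rfl fun i _ => by ring
    _ ≤ ∑ i, (l ^ 2 * (1 / (n : ℝ)) * σ i ^ 2) *
          ((l * cstar) ^ 3 * (c i / cstar) ^ 2 * fSeries 5 (l * cstar)) := by
        refine Finset.sum_le_sum fun i _ => ?_
        have hcoef : (0 : ℝ) ≤ l ^ 2 * (1 / (n : ℝ)) * σ i ^ 2 := by positivity
        refine mul_le_mul_of_nonneg_left ?_ hcoef
        rw [hlc i]
        exact key_pointwise (by positivity) (div_nonneg (hcnonneg i) hcpos.le)
          ((div_le_one hcpos).mpr (hcmax i))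
    _ = l ^ 5 * cstar ^ 3 *
          (((1 / (n : ℝ)) * ∑ i, σ i ^ 2 * (c i / cstar)) -
            ((1 / (n : ℝ)) * ∑ i, σ i ^ 2 * (c i / cstar) * (1 - c i / cstar))) *
          fSeries 5 (l * cstar) := by
        simp only [Finset.mul_sum, Finset.sum_mul, ← Finset.sum_sub_distrib]
        exact Finset.sum_congr rfl fun i _ => by ring
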